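/- For the symmetric case $n_0 = n_1 = \cdots = n_N = n$, the coefficients $c_i = 1 - i + \min_{k=1,\ldots,N} \lfloor ((k+1)n - i)/k \rfloor$ satisfy: the diversity at integer multiplexing gain $k$, defined as $d(k) = \sum_{i=k+1}^{n} c_i$, equals $\frac{(n-k)(n+1-k)}{2} + \frac{a(k)}{2}\big((a(k)-1)N + 2 b(k)\big)$, where $a(k) = \lfloor (n-k)/N \rfloor$ and $b(k) = (n-k) \bmod N$. -/

import Mathlib

lemma gauss_aux : ∀ m : ℕ, 2 * ∑ j ∈ Finset.range m, ((j : ℤ) + 1) = m * (m + 1) := by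
  intro m
  induction m with
  | zero => simp
  | succ m ih =>
    rw [Finset.sum_range_succ]
    push_cast
    push_cast at ih
    linear_combination ih

lemma sumdiv_aux (N : ℕ) (hN : 0 < N) : ∀ m : ℕ,
    2 * ∑ j ∈ Finset.range m, ((j / N : ℕ) : ℤ) =
      ((m / N : ℕ) : ℤ) * (((m / N : ℕ) : ℤ) - 1) * N + 2 * ((m / N : ℕ) : ℤ) * ((m % N : ℕ) : ℤ) := by
  intro m
  induction m with
  | zero => simp [Nat.div_eq_of_lt hN]
  | succ m ih =>
    rw [Finset.sum_range_succ]
    rcases Nat.lt_or_ge (m % N + 1) N with h | h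
    · have h1 : (m + 1) / N = m / N := by
        conv_lhs => rw [← Nat.div_add_mod m N]
        rw [add_assoc, Nat.mul_add_div hN, Nat.div_eq_of_lt h, add_zero]
      have h2 : (m + 1) % N = m % N + 1 := by
        conv_lhs => rw [← Nat.div_add_mod m N]
        rw [add_assoc, Nat.mul_add_mod, Nat.mod_eq_of_lt h]
      rw [h1, h2]
      push_cast
      push_cast at ih
      linear_combination ih
    · have hNe : m % N + 1 = N := by have := Nat.mod_lt m hN; omega
      have hm : m + 1 = N * (m / N + 1) := by
        conv_lhs => rw [← Nat.div_add_mod m N]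
        ring_nf
        omega
      have h1 : (m + 1) / N = m / N + 1 := by rw [hm, Nat.mul_div_cancel_left _ hN]
      have h2 : (m + 1) % N = 0 := by rw [hm, Nat.mul_mod_right]
      rw [h1, h2]
      have hNe' : ((m % N : ℕ) : ℤ) + 1 = N := by exact_mod_cast hNe
      push_cast
      push_cast at ih
      push_cast at hNe'
      linear_combination ih + 2 * ((m : ℤ) / N : ℤ) * hNe'

/-- Closed-form DMT of the symmetric `(n, …, n)` Rayleigh product channel
of length `N` at integer multiplexing gain `k`:
`∑_{i=k+1}^n c_i = (n-k)(n+1-k)/2 + (a/2)((a-1)N + 2b)`, where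
`a = ⌊(n-k)/N⌋` and `b = (n-k) mod N`. -/
theorem rp_symmetric_dmt (N n : ℕ) (hN : 1 ≤ N) (hn : 1 ≤ n)
    (k : ℕ) (hk : k ≤ n)
    (c : ℤ → ℤ)
    (hc : ∀ i : ℤ, c i = 1 - i +
      (Finset.Icc 1 N).inf' (Finset.nonempty_Icc.mpr hN)
        (fun m => Int.fdiv (((m : ℤ) + 1) * n - i) (m : ℤ)))
    (a b : ℤ)
    (ha : a = Int.fdiv ((n : ℤ) - k) (N : ℤ))
    (hb : b = ((n : ℤ) - k) % (N : ℤ)) :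
    ((∑ i ∈ Finset.Icc (k + 1 : ℤ) (n : ℤ), c i : ℤ) : ℚ)
      = ((n : ℚ) - k) * ((n : ℚ) + 1 - k) / 2
        + (a : ℚ) / 2 * (((a : ℚ) - 1) * N + 2 * (b : ℚ)) := by
  have hN0 : (0 : ℤ) < (N : ℤ) := by exact_mod_cast hN
  -- value of each f m on i = n - j
  have hfval : ∀ (j : ℕ) (m : ℕ), 1 ≤ m →
      Int.fdiv (((m : ℤ) + 1) * n - ((n : ℤ) - j)) (m : ℤ) = ((j / m : ℕ) : ℤ) + n := by
    intro j m hm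
    have hm0 : (m : ℤ) ≠ 0 := by exact_mod_cast Nat.one_le_iff_ne_zero.mp hm
    have he : ((m : ℤ) + 1) * n - ((n : ℤ) - j) = (j : ℤ) + (n : ℤ) * m := by ring
    rw [he, Int.fdiv_eq_ediv_of_nonneg _ (by positivity), Int.add_mul_ediv_right _ _ hm0,
      Int.natCast_ediv]
  -- value of c on i = n - j
  have hcval : ∀ j : ℕ, c ((n : ℤ) - j) = (j : ℤ) + 1 + ((j / N : ℕ) : ℤ) := by
    intro j
    rw [hc]
    have hinf : (Finset.Icc 1 N).inf' (Finset.nonempty_Icc.mpr hN)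
        (fun m => Int.fdiv (((m : ℤ) + 1) * n - ((n : ℤ) - j)) (m : ℤ))
        = ((j / N : ℕ) : ℤ) + n := by
      apply le_antisymm
      · refine le_trans (Finset.inf'_le _ (Finset.mem_Icc.mpr ⟨hN, le_refl N⟩)) ?_
        rw [hfval j N hN]
      · apply Finset.le_inf'
        intro m hm
        obtain ⟨hm1, hm2⟩ := Finset.mem_Icc.mp hm
        rw [hfval j m hm1]
        have : j / N ≤ j / m := Nat.div_le_div_left hm2 hm1
        have : ((j / N : ℕ) : ℤ) ≤ ((j / m : ℕ) : ℤ) := by exact_mod_cast this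
        omega
    rw [hinf]
    ring
  -- reindex the sum
  have hsum : ∑ i ∈ Finset.Icc (k + 1 : ℤ) (n : ℤ), c i
      = ∑ j ∈ Finset.range (n - k), ((j : ℤ) + 1 + ((j / N : ℕ) : ℤ)) := by
    refine Finset.sum_nbij' (i := fun i => ((n : ℤ) - i).toNat)
      (j := fun j => (n : ℤ) - (j : ℕ)) ?_ ?_ ?_ ?_ ?_
    · intro i hi
      rw [Finset.mem_Icc] at hi
      rw [Finset.mem_range]
      omega
    · intro j hj
      rw [Finset.mem_range] at hj
      rw [Finset.mem_Icc]
      omega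
    · intro i hi
      rw [Finset.mem_Icc] at hi
      omega
    · intro j hj
      rw [Finset.mem_range] at hj
      omega
    · intro i hi
      rw [Finset.mem_Icc] at hi
      have h1 : ((((n : ℤ) - i).toNat : ℤ)) = (n : ℤ) - i := by omega
      have h2 := hcval (((n : ℤ) - i).toNat)
      nth_rewrite 1 [h1] at h2
      rw [sub_sub_cancel] at h2
      exact h2
  -- identify a and b with nat div/mod of n - k
  have hnk : ((n - k : ℕ) : ℤ) = (n : ℤ) - k := by omega
  have ha' : a = (((n - k) / N : ℕ) : ℤ) := by
    rw [ha, ← hnk, ← Int.ofNat_fdiv]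
  have hb' : b = (((n - k) % N : ℕ) : ℤ) := by
    rw [hb, ← hnk]
    push_cast
    ring
  -- integer identity
  have key : 2 * ∑ i ∈ Finset.Icc (k + 1 : ℤ) (n : ℤ), c i
      = ((n - k : ℕ) : ℤ) * (((n - k : ℕ) : ℤ) + 1) + (a * (a - 1) * N + 2 * a * b) := by
    rw [hsum, Finset.sum_add_distrib, mul_add, gauss_aux, sumdiv_aux N hN, ha', hb']
  have hnkQ : ((n - k : ℕ) : ℚ) = (n : ℚ) - k := by
    have := hnk
    exact_mod_cast this
  have keyQ := congrArg (fun z : ℤ => (z : ℚ)) key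
  push_cast at keyQ
  rw [hnkQ] at keyQ
  push_cast
  linear_combination keyQ / 2
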